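/- Under the nonlinear fixed-point iteration setup and RRE setup with ε_n ≠ 0, suppose ‖W̃⁺‖·‖ε_n‖ ≤ η and ‖W̃⁺‖·‖W − W̃‖ ≤ Δ₀ < 1. Then the RRE coefficient vector ξ = −W⁺ u_n ∈ ℂᵏ satisfies ‖ξ‖ ≤ (1+L)·η·(1 + √2·Δ₀/(1−Δ₀)), and the scalars defined by γ₀ = 1 − ξ₀, γᵢ = ξ_{i−1} − ξᵢ for 1 ≤ i ≤ k−1, and γ_k = ξ_{k−1} satisfy Σγᵢ = 1 and Σ_{i=0}^{k} |γᵢ| ≤ 1 + 2√k·(1+L)·η·(1 + √2·Δ₀/(1−Δ₀)). -/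

import Mathlib

open scoped Matrix Matrix.Norms.L2Operator

/-- Moore–Penrose inverse of a full-column-rank matrix: `K⁺ = (KᴴK)⁻¹Kᴴ`. -/
noncomputable def pinv {m n : ℕ} (A : Matrix (Fin m) (Fin n) ℂ) : Matrix (Fin n) (Fin m) ℂ :=
  (Aᴴ * A)⁻¹ * Aᴴ

/-- A matrix acting on Euclidean vectors. -/
noncomputable def appE {m n : ℕ} (A : Matrix (Fin m) (Fin n) ℂ)
    (v : EuclideanSpace ℂ (Fin n)) : EuclideanSpace ℂ (Fin m) :=
  Matrix.toEuclideanLin A v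

/-- The `N×k` matrix `U` with columns the first differences `u_{n+j} = x_{n+j+1} − x_{n+j}`,
`j = 0,…,k−1`. -/
noncomputable def Umat (N k n : ℕ) (x : ℕ → EuclideanSpace ℂ (Fin N)) :
    Matrix (Fin N) (Fin k) ℂ :=
  Matrix.of fun p j => (x (n + (j : ℕ) + 1) - x (n + (j : ℕ))) p

/-- The `N×k` matrix `W` with columns the second differences
`w_{n+j} = u_{n+j+1} − u_{n+j}`, `j = 0,…,k−1`. -/
noncomputable def Wmat (N k n : ℕ) (x : ℕ → EuclideanSpace ℂ (Fin N)) :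
    Matrix (Fin N) (Fin k) ℂ :=
  Matrix.of fun p j =>
    ((x (n + (j : ℕ) + 2) - x (n + (j : ℕ) + 1))
      - (x (n + (j : ℕ) + 1) - x (n + (j : ℕ)))) p

/-- The `N×k` matrix `Ũ` with columns `ũ_{n+j} = F̃ʲ(F̃ − I) ε_n` coming from the linear
iteration `x̃_n = x_n`, `x̃_{m+1} = s + F̃(x̃_m − s)`. -/
noncomputable def UmatT (N k : ℕ)
    (F : EuclideanSpace ℂ (Fin N) →L[ℂ] EuclideanSpace ℂ (Fin N))
    (ε : EuclideanSpace ℂ (Fin N)) : Matrix (Fin N) (Fin k) ℂ :=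
  Matrix.of fun p j => ((F ^ (j : ℕ) * (F - 1)) ε) p

/-- The `N×k` matrix `W̃` with columns `w̃_{n+j} = F̃ʲ(F̃ − I)² ε_n` coming from the linear
iteration `x̃_n = x_n`, `x̃_{m+1} = s + F̃(x̃_m − s)`. -/
noncomputable def WmatT (N k : ℕ)
    (F : EuclideanSpace ℂ (Fin N) →L[ℂ] EuclideanSpace ℂ (Fin N))
    (ε : EuclideanSpace ℂ (Fin N)) : Matrix (Fin N) (Fin k) ℂ :=
  Matrix.of fun p j =>
    ((F ^ (j : ℕ) * (F - 1) ^ 2 :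
      EuclideanSpace ℂ (Fin N) →L[ℂ] EuclideanSpace ℂ (Fin N)) ε) p

/-- The RRE approximation `s_{n,k} = x_n − U W⁺ u_n`. -/
noncomputable def sRRE (N k n : ℕ) (x : ℕ → EuclideanSpace ℂ (Fin N)) :
    EuclideanSpace ℂ (Fin N) :=
  x n - appE (Umat N k n x) (appE (pinv (Wmat N k n x)) (x (n + 1) - x n))

/-- The RRE approximation `s̃_{n,k} = x_n − Ũ W̃⁺ ũ_n` for the linear iteration
`x̃_n = x_n`, `x̃_{m+1} = s + F̃(x̃_m − s)`, whose first difference at `n` is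
`ũ_n = (F̃ − I)(x_n − s)`. -/
noncomputable def sRREt (N k n : ℕ)
    (F : EuclideanSpace ℂ (Fin N) →L[ℂ] EuclideanSpace ℂ (Fin N))
    (s : EuclideanSpace ℂ (Fin N)) (x : ℕ → EuclideanSpace ℂ (Fin N)) :
    EuclideanSpace ℂ (Fin N) :=
  x n - appE (UmatT N k F (x n - s))
    (appE (pinv (WmatT N k F (x n - s))) ((F - 1) (x n - s)))



lemma appE_mul {m n p : ℕ} (A : Matrix (Fin m) (Fin n) ℂ) (B : Matrix (Fin n) (Fin p) ℂ)
    (v : EuclideanSpace ℂ (Fin p)) : appE (A * B) v = appE A (appE B v) := by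
  simp [appE, Matrix.toEuclideanLin_apply, Matrix.mulVec_mulVec]

lemma appE_one {n : ℕ} (v : EuclideanSpace ℂ (Fin n)) : appE 1 v = v := by
  simp [appE, Matrix.toEuclideanLin_apply]

lemma appE_sub {m n : ℕ} (A B : Matrix (Fin m) (Fin n) ℂ) (v : EuclideanSpace ℂ (Fin n)) :
    appE (A - B) v = appE A v - appE B v := by
  simp [appE, map_sub]

lemma appE_norm_le {m n : ℕ} (A : Matrix (Fin m) (Fin n) ℂ) (v : EuclideanSpace ℂ (Fin n)) :
    ‖appE A v‖ ≤ ‖A‖ * ‖v‖ :=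
  A.l2_opNorm_mulVec v

lemma inner_appE {m n : ℕ} (A : Matrix (Fin m) (Fin n) ℂ) (x : EuclideanSpace ℂ (Fin n))
    (y : EuclideanSpace ℂ (Fin m)) :
    (inner ℂ (appE A x) y : ℂ) = inner ℂ x (appE Aᴴ y) := by
  rw [appE, appE, Matrix.toEuclideanLin_conjTranspose_eq_adjoint,
    LinearMap.adjoint_inner_right]

open ComplexOrder in
lemma isUnit_CTms {m k : ℕ} (A : Matrix (Fin m) (Fin k) ℂ) (h : A.rank = k) :
    IsUnit (Aᴴ * A) := by
  rw [← Matrix.mulVec_surjective_iff_isUnit]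
  have hr : (Aᴴ * A).rank = k := by rw [Matrix.rank_conjTranspose_mul_self, h]
  have htop : LinearMap.range (Aᴴ * A).mulVecLin = ⊤ := by
    apply Submodule.eq_top_of_finrank_eq
    simpa [Matrix.rank] using hr
  have := LinearMap.range_eq_top.mp htop
  simpa only [Matrix.coe_mulVecLin] using this

lemma pinv_mul_self {m k : ℕ} (A : Matrix (Fin m) (Fin k) ℂ) (h : A.rank = k) :
    pinv A * A = 1 := by
  rw [pinv, Matrix.mul_assoc]
  exact Matrix.nonsing_inv_mul _ ((Matrix.isUnit_iff_isUnit_det _).mp (isUnit_CTms A h))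

lemma norm_appE_pinv_le {m k : ℕ} (W : Matrix (Fin m) (Fin k) ℂ) (h : W.rank = k)
    (u : EuclideanSpace ℂ (Fin m)) : ‖appE W (appE (pinv W) u)‖ ≤ ‖u‖ := by
  set c := appE (pinv W) u with hc
  set v := appE W c with hv
  have hdet : IsUnit (Wᴴ * W).det :=
    (Matrix.isUnit_iff_isUnit_det _).mp (isUnit_CTms W h)
  have hcancel : (Wᴴ * W) * pinv W = Wᴴ := by
    rw [pinv]; exact Matrix.mul_nonsing_inv_cancel_left _ _ hdet
  have hWc : appE (Wᴴ * W) c = appE Wᴴ u := by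
    rw [hc, ← appE_mul, hcancel]
  have hinner : (inner ℂ v v : ℂ) = inner ℂ v u := by
    calc (inner ℂ v v : ℂ) = inner ℂ c (appE Wᴴ v) := by rw [hv, inner_appE]
    _ = inner ℂ c (appE Wᴴ (appE W c)) := by rw [hv]
    _ = inner ℂ c (appE (Wᴴ * W) c) := by rw [appE_mul]
    _ = inner ℂ c (appE Wᴴ u) := by rw [hWc]
    _ = inner ℂ v u := by rw [hv]; exact (inner_appE W c u).symm
  have h2 : ‖v‖ * ‖v‖ ≤ ‖v‖ * ‖u‖ := by
    have hre : ‖v‖ * ‖v‖ = (inner ℂ v u : ℂ).re := by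
      rw [← hinner]
      simpa using (@inner_self_eq_norm_mul_norm ℂ _ _ _ _ v).symm
    have hle : (inner ℂ v u : ℂ).re ≤ ‖(inner ℂ v u : ℂ)‖ := Complex.re_le_norm _
    have := @norm_inner_le_norm ℂ _ _ _ _ v u
    linarith [hre, hle, this]
  rcases eq_or_lt_of_le (norm_nonneg v) with hv0 | hvpos
  · rw [← hv0]; exact norm_nonneg u
  · exact le_of_mul_le_mul_left h2 hvpos

lemma lower_bound_appE {m k : ℕ} (W Wt : Matrix (Fin m) (Fin k) ℂ) (h : Wt.rank = k)
    (Δ₀ : ℝ) (hΔ : ‖pinv Wt‖ * ‖W - Wt‖ ≤ Δ₀) (c : EuclideanSpace ℂ (Fin k)) :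
    (1 - Δ₀) * ‖c‖ ≤ ‖pinv Wt‖ * ‖appE W c‖ := by
  have h1 : ‖c‖ ≤ ‖pinv Wt‖ * ‖appE Wt c‖ := by
    calc ‖c‖ = ‖appE (pinv Wt * Wt) c‖ := by rw [pinv_mul_self Wt h, appE_one]
    _ = ‖appE (pinv Wt) (appE Wt c)‖ := by rw [appE_mul]
    _ ≤ ‖pinv Wt‖ * ‖appE Wt c‖ := appE_norm_le _ _
  have h2 : ‖appE Wt c‖ ≤ ‖appE W c‖ + ‖W - Wt‖ * ‖c‖ := by
    have : appE Wt c = appE W c - appE (W - Wt) c := by rw [appE_sub]; abel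
    rw [this]
    exact (norm_sub_le _ _).trans (by gcongr; exact appE_norm_le _ _)
  have h3 : ‖pinv Wt‖ * (‖W - Wt‖ * ‖c‖) ≤ Δ₀ * ‖c‖ := by
    rw [← mul_assoc]
    exact mul_le_mul_of_nonneg_right hΔ (norm_nonneg c)
  nlinarith [norm_nonneg (pinv Wt), norm_nonneg c, norm_nonneg (appE Wt c),
    mul_le_mul_of_nonneg_left h2 (norm_nonneg (pinv Wt))]

lemma sum_norm_le_sqrt_card {k : ℕ} (ξ : EuclideanSpace ℂ (Fin k)) :
    ∑ j : Fin k, ‖ξ j‖ ≤ Real.sqrt k * ‖ξ‖ := by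
  set v : EuclideanSpace ℝ (Fin k) := WithLp.toLp 2 (fun j => ‖ξ j‖) with hvdef
  set o : EuclideanSpace ℝ (Fin k) := WithLp.toLp 2 (fun _ => 1) with hodef
  have h := real_inner_le_norm o v
  have hio : (inner ℝ o v : ℝ) = ∑ j : Fin k, ‖ξ j‖ := by
    simp [PiLp.inner_apply, hvdef, hodef]
  have hno : ‖o‖ = Real.sqrt k := by
    rw [EuclideanSpace.norm_eq]
    simp [hodef]
  have hnv : ‖v‖ = ‖ξ‖ := by
    rw [EuclideanSpace.norm_eq, EuclideanSpace.norm_eq]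
    simp [hvdef]
  rw [hio, hno, hnv] at h
  exact h

/-- Under the nonlinear fixed-point iteration and RRE setup with
`ε_n ≠ 0`, `‖W̃⁺‖·‖ε_n‖ ≤ η`, `‖W̃⁺‖·‖W − W̃‖ ≤ Δ₀ < 1`, the RRE coefficient vector
`ξ = −W⁺ u_n` satisfies `‖ξ‖ ≤ (1+L)·η·(1 + √2·Δ₀/(1−Δ₀))`, and the scalars
`γ₀ = 1 − ξ₀`, `γᵢ = ξ_{i−1} − ξᵢ` (`1 ≤ i ≤ k−1`), `γ_k = ξ_{k−1}` satisfy
`∑ γᵢ = 1` and `∑ |γᵢ| ≤ 1 + 2√k·(1+L)·η·(1 + √2·Δ₀/(1−Δ₀))`. -/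
theorem rre_coefficients_bounded
    (N : ℕ) (hN : 1 ≤ N) (s : EuclideanSpace ℂ (Fin N)) (δ : ℝ) (hδ : 0 < δ)
    (L a : ℝ) (hL0 : 0 < L) (hL1 : L < 1) (ha : 0 < a)
    (f : EuclideanSpace ℂ (Fin N) → EuclideanSpace ℂ (Fin N)) (hfs : f s = s)
    (hLip : ∀ x y : EuclideanSpace ℂ (Fin N),
      ‖x - s‖ ≤ δ → ‖y - s‖ ≤ δ → ‖f x - f y‖ ≤ L * ‖x - y‖)
    (F : EuclideanSpace ℂ (Fin N) →L[ℂ] EuclideanSpace ℂ (Fin N)) (hF : ‖F‖ ≤ L)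
    (hTay : ∀ x : EuclideanSpace ℂ (Fin N),
      ‖x - s‖ ≤ δ → ‖f x - s - F (x - s)‖ ≤ a * ‖x - s‖ ^ 2)
    (x : ℕ → EuclideanSpace ℂ (Fin N)) (hx0 : ‖x 0 - s‖ ≤ δ)
    (hxit : ∀ m, x (m + 1) = f (x m))
    (n k : ℕ) (hk : 1 ≤ k) (hεn : x n ≠ s)
    (hWrank : (Wmat N k n x).rank = k) (hWtrank : (WmatT N k F (x n - s)).rank = k)
    (η Δ₀ : ℝ) (hη : 0 < η) (hΔ₀0 : 0 ≤ Δ₀) (hΔ₀1 : Δ₀ < 1)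
    (hWtbound : ‖pinv (WmatT N k F (x n - s))‖ * ‖x n - s‖ ≤ η)
    (hΔbound : ‖pinv (WmatT N k F (x n - s))‖
      * ‖Wmat N k n x - WmatT N k F (x n - s)‖ ≤ Δ₀)
    (ξ : EuclideanSpace ℂ (Fin k))
    (hξ : ξ = -(appE (pinv (Wmat N k n x)) (x (n + 1) - x n)))
    (γ : ℕ → ℂ)
    (hγ0 : γ 0 = 1 - ξ ⟨0, hk⟩)
    (hγmid : ∀ i : ℕ, 1 ≤ i → i ≤ k - 1 →
      ∀ (h1 : i - 1 < k) (h2 : i < k), γ i = ξ ⟨i - 1, h1⟩ - ξ ⟨i, h2⟩)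
    (hγk : γ k = ξ ⟨k - 1, by omega⟩) :
    ‖ξ‖ ≤ (1 + L) * η * (1 + Real.sqrt 2 * Δ₀ / (1 - Δ₀)) ∧
    (∑ i ∈ Finset.range (k + 1), γ i) = 1 ∧
    (∑ i ∈ Finset.range (k + 1), ‖γ i‖) ≤
      1 + 2 * Real.sqrt k * (1 + L) * η * (1 + Real.sqrt 2 * Δ₀ / (1 - Δ₀)) := by

  have hball : ∀ m, ‖x m - s‖ ≤ δ := by
    intro m
    induction m with
    | zero => exact hx0
    | succ m ih =>
      rw [hxit m]
      have h2 : ‖f (x m) - f s‖ ≤ L * ‖x m - s‖ := hLip _ _ ih (by simp [hδ.le])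
      rw [hfs] at h2
      nlinarith [norm_nonneg (x m - s)]
  have hub : ‖x (n + 1) - x n‖ ≤ (1 + L) * ‖x n - s‖ := by
    have h1 : x (n + 1) - x n = (f (x n) - s) - (x n - s) := by rw [hxit n]; abel
    have h2 : ‖f (x n) - f s‖ ≤ L * ‖x n - s‖ := hLip _ _ (hball n) (by simp [hδ.le])
    rw [hfs] at h2
    calc ‖x (n + 1) - x n‖ ≤ ‖f (x n) - s‖ + ‖x n - s‖ := h1 ▸ norm_sub_le _ _
    _ ≤ (1 + L) * ‖x n - s‖ := by linarith
  set u := x (n + 1) - x n with hudef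
  set Wm := Wmat N k n x with hWmdef
  set Wt := WmatT N k F (x n - s) with hWtdef
  set c := appE (pinv Wm) u with hcdef
  have hξc : ‖ξ‖ = ‖c‖ := by rw [hξ, norm_neg]
  have hWc : ‖appE Wm c‖ ≤ ‖u‖ := norm_appE_pinv_le Wm hWrank u
  have hlow : (1 - Δ₀) * ‖c‖ ≤ ‖pinv Wt‖ * ‖appE Wm c‖ :=
    lower_bound_appE Wm Wt hWtrank Δ₀ hΔbound c
  have h1mΔ : (0:ℝ) < 1 - Δ₀ := by linarith
  have hchain : (1 - Δ₀) * ‖c‖ ≤ (1 + L) * η := by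
    have s1 : ‖pinv Wt‖ * ‖appE Wm c‖ ≤ ‖pinv Wt‖ * ‖u‖ :=
      mul_le_mul_of_nonneg_left hWc (norm_nonneg _)
    have s2 : ‖pinv Wt‖ * ‖u‖ ≤ ‖pinv Wt‖ * ((1 + L) * ‖x n - s‖) :=
      mul_le_mul_of_nonneg_left hub (norm_nonneg _)
    have s3 : ‖pinv Wt‖ * ((1 + L) * ‖x n - s‖) = (1 + L) * (‖pinv Wt‖ * ‖x n - s‖) := by
      ring
    have s4 : (1 + L) * (‖pinv Wt‖ * ‖x n - s‖) ≤ (1 + L) * η :=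
      mul_le_mul_of_nonneg_left hWtbound (by linarith)
    linarith
  have hB : (0:ℝ) ≤ (1 + L) * η := by nlinarith
  have hs2 : (1:ℝ) ≤ Real.sqrt 2 := by
    rw [show (1:ℝ) = Real.sqrt 1 from Real.sqrt_one.symm]
    exact Real.sqrt_le_sqrt (by norm_num)
  have hξbound : ‖ξ‖ ≤ (1 + L) * η * (1 + Real.sqrt 2 * Δ₀ / (1 - Δ₀)) := by
    have hx1 : ‖ξ‖ ≤ (1 + L) * η / (1 - Δ₀) := by
      rw [hξc, le_div_iff₀ h1mΔ, mul_comm]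
      exact hchain
    have e : (1 + L) * η * (1 + Real.sqrt 2 * Δ₀ / (1 - Δ₀)) - (1 + L) * η / (1 - Δ₀)
        = (1 + L) * η * ((Real.sqrt 2 - 1) * Δ₀) / (1 - Δ₀) := by
      field_simp
      ring
    have hnn : 0 ≤ (1 + L) * η * ((Real.sqrt 2 - 1) * Δ₀) / (1 - Δ₀) :=
      div_nonneg (mul_nonneg hB (mul_nonneg (by linarith) hΔ₀0)) h1mΔ.le
    linarith
  classical
  set g : ℕ → ℂ := fun j => if h : j < k then ξ ⟨j, h⟩ else 0 with hg
  set G : ℕ → ℂ := fun i => if i = 0 then 1 else g (i - 1) with hG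
  have hgk : g k = 0 := by simp [hg]
  have hGγ : ∀ i < k + 1, γ i = G i - G (i + 1) := by
    intro i hi
    rcases Nat.eq_zero_or_pos i with h0 | h1
    · subst h0
      have e1 : G 1 = ξ ⟨0, hk⟩ := by
        simp only [hG, hg, if_neg one_ne_zero, Nat.sub_self,
          dif_pos (show 0 < k from hk)]
      have e0 : G 0 = 1 := by simp [hG]
      rw [hγ0, e1, e0]
    rcases eq_or_lt_of_le (Nat.lt_succ_iff.mp hi) with hik | hik
    · subst hik
      have e1 : G i = ξ ⟨i - 1, by omega⟩ := by
        simp [hG, hg, show i ≠ 0 by omega, show i - 1 < i by omega]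
      have e2 : G (i + 1) = 0 := by simp [hG, hg]
      rw [hγk, e1, e2, sub_zero]
    · have h2 : i < k := hik
      have h1' : i - 1 < k := by omega
      rw [hγmid i h1 (by omega) h1' h2]
      have e1 : G i = ξ ⟨i - 1, h1'⟩ := by simp [hG, hg, show i ≠ 0 by omega, h1']
      have e2 : G (i + 1) = ξ ⟨i, h2⟩ := by simp [hG, hg, h2]
      rw [e1, e2]
  have hsum1 : (∑ i ∈ Finset.range (k + 1), γ i) = 1 := by
    rw [Finset.sum_congr rfl (fun i hi => hGγ i (Finset.mem_range.mp hi)),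
      Finset.sum_range_sub' G (k + 1)]
    simp [hG, hgk]
  have habs : ∀ i ∈ Finset.range (k + 1), ‖γ i‖ ≤ ‖G i‖ + ‖G (i + 1)‖ := by
    intro i hi
    rw [hGγ i (Finset.mem_range.mp hi)]
    exact norm_sub_le _ _
  have hS : ∑ i ∈ Finset.range k, ‖g i‖ ≤ Real.sqrt k * ‖ξ‖ := by
    rw [← Fin.sum_univ_eq_sum_range (fun i => ‖g i‖) k]
    refine le_trans (le_of_eq ?_) (sum_norm_le_sqrt_card ξ)
    refine Finset.sum_congr rfl fun j _ => ?_
    simp [hg, j.isLt]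
  have hsq : (0:ℝ) ≤ Real.sqrt k := Real.sqrt_nonneg _
  have hsum3 : (∑ i ∈ Finset.range (k + 1), ‖γ i‖) ≤
      1 + 2 * Real.sqrt k * (1 + L) * η * (1 + Real.sqrt 2 * Δ₀ / (1 - Δ₀)) := by
    have t2 : Real.sqrt k * ‖ξ‖
        ≤ Real.sqrt k * ((1 + L) * η * (1 + Real.sqrt 2 * Δ₀ / (1 - Δ₀))) :=
      mul_le_mul_of_nonneg_left hξbound hsq
    have e3 : 1 + 2 * (Real.sqrt k * ((1 + L) * η * (1 + Real.sqrt 2 * Δ₀ / (1 - Δ₀))))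
        = 1 + 2 * Real.sqrt k * (1 + L) * η * (1 + Real.sqrt 2 * Δ₀ / (1 - Δ₀)) := by
      ring
    calc ∑ i ∈ Finset.range (k + 1), ‖γ i‖
        ≤ ∑ i ∈ Finset.range (k + 1), (‖G i‖ + ‖G (i + 1)‖) := Finset.sum_le_sum habs
    _ = (∑ i ∈ Finset.range (k + 1), ‖G i‖)
        + ∑ i ∈ Finset.range (k + 1), ‖G (i + 1)‖ := Finset.sum_add_distrib
    _ = 1 + 2 * ∑ i ∈ Finset.range k, ‖g i‖ := by
        rw [Finset.sum_range_succ' (fun i => ‖G i‖) k,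
          Finset.sum_range_succ (fun i => ‖G (i + 1)‖) k]
        have e0 : ‖G 0‖ = 1 := by simp [hG]
        have ek : ‖G (k + 1)‖ = 0 := by simp [hG, hgk]
        have emid : ∀ i : ℕ, ‖G (i + 1)‖ = ‖g i‖ := fun i => by simp [hG]
        simp only [emid, e0, hgk, norm_zero]
        ring
    _ ≤ 1 + 2 * Real.sqrt k * (1 + L) * η * (1 + Real.sqrt 2 * Δ₀ / (1 - Δ₀)) := by
        rw [← e3]
        linarith
  exact ⟨hξbound, hsum1, hsum3⟩
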